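/- Let p_u(x) = ∑_{k=0}^{n−1} φ_k(x)², τ_n(x) = √(n/2) φ_{n−1}(x)·(1/2)∫_ℝ sign(x−t) φ_n(t) dt, α_n(x) = 𝟙{n odd}·φ_{n−1}(x)/∫_ℝ φ_{n−1}(t)dt, and p_o = p_u + τ_n + α_n (the GOE mean density at σ² = 1/2). Then 2 p_o''' + 2(2n − 1 − x²) p_o' − 4x p_o = −3 p_u' − 6x p_u on ℝ. -/

import Mathlib

open Real MeasureTheory

/-- Physicists' Hermite polynomial `H n x = (-1)^n e^{x^2} (d/dx)^n e^{-x^2}`. -/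
noncomputable def physHermite (n : ℕ) (x : ℝ) : ℝ :=
  (-1)^n * Real.exp (x^2) * iteratedDeriv n (fun y => Real.exp (-y^2)) x

/-- Hermite function `φ k x = (2^k k! √π)^{-1/2} H_k(x) e^{-x²/2}`. -/
noncomputable def hermiteFn (k : ℕ) (x : ℝ) : ℝ :=
  (Real.sqrt (2^k * k.factorial * Real.sqrt Real.pi))⁻¹ * physHermite k x * Real.exp (-x^2/2)

/-- Confluent hypergeometric function `₁F₁(-k; b; x)` with nonpositive integer first
parameter `-k`; it is the polynomial `∑_{j=0}^{k} ((-k)_j/(b)_j) x^j/j!`, where the rising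
factorial `(-k)_j = (-1)^j k!/(k-j)!`. -/
noncomputable def oneF1neg (k : ℕ) (b x : ℝ) : ℝ :=
  ∑ j ∈ Finset.range (k+1),
    ((-1)^j * (k.descFactorial j : ℝ) / ∏ i ∈ Finset.range j, (b + i)) * x^j / (j.factorial : ℝ)

/-- GUE mean density at σ² = 1/2: partial sum of squared Hermite functions. -/
noncomputable def pGUE (n : ℕ) (x : ℝ) : ℝ := ∑ k ∈ Finset.range n, hermiteFn k x ^ 2

/-- GUE mean density with general variance σ². -/
noncomputable def pGUEvar (n : ℕ) (σ x : ℝ) : ℝ :=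
  (σ * Real.sqrt 2)⁻¹ * pGUE n (x / (σ * Real.sqrt 2))

/-- The function τₙ from the GSE/GOE densities. -/
noncomputable def tauFn (n : ℕ) (x : ℝ) : ℝ :=
  Real.sqrt (n/2) * hermiteFn (n-1) x *
    ((1/2) * ∫ t : ℝ, Real.sign (x - t) * hermiteFn n t)

/-- The function αₙ (for odd n) from the GOE density. -/
noncomputable def alphaFn (n : ℕ) (x : ℝ) : ℝ :=
  hermiteFn (n-1) x / ∫ t : ℝ, hermiteFn (n-1) t

/-! ### Auxiliary development -/

/-- `k`-th derivative of the Gaussian `e^{-x²}`. -/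
noncomputable def gaussD (k : ℕ) : ℝ → ℝ := iteratedDeriv k (fun y => Real.exp (-y^2))

private lemma gauss_contDiff : ContDiff ℝ (⊤ : ℕ∞) (fun y : ℝ => Real.exp (-y^2)) := by
  apply Real.contDiff_exp.comp
  exact (contDiff_id.pow 2).neg

private lemma hasDerivAt_gaussD (k : ℕ) (x : ℝ) :
    HasDerivAt (gaussD k) (gaussD (k+1) x) x := by
  have hdiff : Differentiable ℝ (gaussD k) := by
    apply gauss_contDiff.differentiable_iteratedDeriv
    exact_mod_cast WithTop.coe_lt_top _
  have h := (hdiff x).hasDerivAt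
  have : gaussD (k+1) x = deriv (gaussD k) x := by
    rw [show gaussD (k+1) = deriv (gaussD k) from iteratedDeriv_succ]
  rwa [this]

private lemma gaussD_zero' (x : ℝ) : gaussD 0 x = Real.exp (-x^2) := by
  simp [gaussD]

private lemma gaussD_one' (x : ℝ) : gaussD 1 x = -2*x*gaussD 0 x := by
  have h : HasDerivAt (fun y : ℝ => Real.exp (-y^2)) (-2*x*Real.exp (-x^2)) x := by
    have := ((hasDerivAt_pow 2 x).fun_neg).exp
    convert this using 1
    ring
  rw [show gaussD 1 = deriv (gaussD 0) from iteratedDeriv_succ,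
    show gaussD 0 = (fun y : ℝ => Real.exp (-y^2)) from iteratedDeriv_zero,
    h.deriv]

private lemma gaussD_rec (k : ℕ) (x : ℝ) :
    gaussD (k+2) x = -2*x*gaussD (k+1) x - (2*(k:ℝ)+2)*gaussD k x := by
  induction k generalizing x with
  | zero =>
    have h1 : gaussD 1 = fun x => -2*x*gaussD 0 x := funext gaussD_one'
    have hd : HasDerivAt (fun x : ℝ => -2*x*gaussD 0 x)
        (-2*gaussD 0 x + -2*x*gaussD 1 x) x := by
      have := ((hasDerivAt_id x).const_mul (-2 : ℝ)).fun_mul (hasDerivAt_gaussD 0 x)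
      refine this.congr_deriv (Eq.symm ?_)
      simp only [id_eq]
      ring
    rw [show gaussD 2 = deriv (gaussD 1) from iteratedDeriv_succ,
      show deriv (gaussD 1) = deriv (fun x : ℝ => -2*x*gaussD 0 x) from congrArg deriv h1,
      hd.deriv]
    push_cast
    ring
  | succ k ih =>
    have h1 : gaussD (k+2) = fun x => -2*x*gaussD (k+1) x - (2*(k:ℝ)+2)*gaussD k x :=
      funext ih
    have hd : HasDerivAt (fun x : ℝ => -2*x*gaussD (k+1) x - (2*(k:ℝ)+2)*gaussD k x)
        (-2*gaussD (k+1) x + -2*x*gaussD (k+2) x - (2*(k:ℝ)+2)*gaussD (k+1) x) x := by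
      have h2 := (((hasDerivAt_id x).const_mul (-2 : ℝ)).fun_mul (hasDerivAt_gaussD (k+1) x)).sub
        ((hasDerivAt_gaussD k x).const_mul (2*(k:ℝ)+2))
      refine h2.congr_deriv (Eq.symm ?_)
      simp only [id_eq]
      ring
    rw [show gaussD (k+3) = deriv (gaussD (k+2)) from iteratedDeriv_succ,
      show deriv (gaussD (k+2)) = deriv (fun x : ℝ => -2*x*gaussD (k+1) x - (2*(k:ℝ)+2)*gaussD k x)
        from congrArg deriv h1,
      hd.deriv]
    push_cast
    ring

/-- Normalizing constant of the Hermite functions. -/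
noncomputable def herC (k : ℕ) : ℝ := (Real.sqrt (2^k * k.factorial * Real.sqrt Real.pi))⁻¹

private lemma herC_succ (k : ℕ) : Real.sqrt (2*((k:ℝ)+1)) * herC (k+1) = herC k := by
  rw [herC, herC]
  rw [show (2:ℝ)^(k+1) * (k+1).factorial * Real.sqrt π
      = (2*((k:ℝ)+1)) * (2^k * k.factorial * Real.sqrt π) by
    push_cast [Nat.factorial_succ]; ring]
  rw [Real.sqrt_mul (x := 2*((k:ℝ)+1)) (by positivity) (2^k * k.factorial * Real.sqrt π),
    mul_inv, ← mul_assoc,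
    mul_inv_cancel₀ (ne_of_gt (Real.sqrt_pos.mpr (by positivity))), one_mul]

private lemma hermiteFn_eq (k : ℕ) (x : ℝ) :
    hermiteFn k x = herC k * ((-1)^k * (Real.exp (x^2/2) * gaussD k x)) := by
  have h : Real.exp (x^2) * Real.exp (-x^2/2) = Real.exp (x^2/2) := by
    rw [← Real.exp_add]; ring_nf
  simp only [hermiteFn, physHermite, herC, gaussD]
  linear_combination ((Real.sqrt (2^k * k.factorial * Real.sqrt π))⁻¹ * (-1:ℝ)^k *
    iteratedDeriv k (fun y => Real.exp (-y^2)) x) * h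

/-- Raising ladder relation. -/
private lemma hasDerivAt_hermiteFn (k : ℕ) (x : ℝ) :
    HasDerivAt (hermiteFn k)
      (x * hermiteFn k x - Real.sqrt (2*((k:ℝ)+1)) * hermiteFn (k+1) x) x := by
  have hfun : hermiteFn k = fun y => herC k * ((-1)^k * (Real.exp (y^2/2) * gaussD k y)) :=
    funext (hermiteFn_eq k)
  have hE : HasDerivAt (fun y : ℝ => Real.exp (y^2/2)) (Real.exp (x^2/2) * x) x := by
    have := ((hasDerivAt_pow 2 x).div_const 2).exp
    convert this using 1
    ring
  have hprod := ((hE.mul (hasDerivAt_gaussD k x)).const_mul ((-1:ℝ)^k)).const_mul (herC k)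
  have hmain : HasDerivAt (hermiteFn k)
      (herC k * ((-1)^k * (Real.exp (x^2/2) * x * gaussD k x
        + Real.exp (x^2/2) * gaussD (k+1) x))) x := by
    rw [hfun]
    exact hprod
  convert hmain using 1
  rw [hermiteFn_eq k x, hermiteFn_eq (k+1) x]
  have hcs := herC_succ k
  linear_combination (-(-1:ℝ)^(k+1) * Real.exp (x^2/2) * gaussD (k+1) x) * hcs

/-- Three-term recurrence. -/
private lemma hermiteFn_rec (k : ℕ) (x : ℝ) :
    Real.sqrt (2*((k:ℝ)+1)) * hermiteFn (k+1) x
      = 2*x*hermiteFn k x - Real.sqrt (2*(k:ℝ)) * hermiteFn (k-1) x := by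
  cases k with
  | zero =>
    simp only [Nat.cast_zero, mul_zero, Real.sqrt_zero, zero_mul, sub_zero, zero_add, mul_one]
    rw [hermiteFn_eq 1 x, hermiteFn_eq 0 x, gaussD_one']
    have hcs := herC_succ 0
    simp only [Nat.cast_zero, zero_add, mul_one] at hcs
    linear_combination (2 * x * Real.exp (x^2/2) * gaussD 0 x) * hcs
  | succ k =>
    have h2 := herC_succ (k+1)
    have h1 := herC_succ k
    have hm : Real.sqrt (2*((k:ℝ)+1)) * Real.sqrt (2*((k:ℝ)+1)) = 2*((k:ℝ)+1) :=
      Real.mul_self_sqrt (by positivity)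
    push_cast at h2 ⊢
    try simp only [Nat.add_sub_cancel]
    rw [hermiteFn_eq (k+2) x, hermiteFn_eq (k+1) x, hermiteFn_eq k x, gaussD_rec k x]
    linear_combination ((-1:ℝ)^(k+2) * Real.exp (x^2/2) * (-2*x*gaussD (k+1) x
        - (2*(k:ℝ)+2)*gaussD k x)) * h2
      + (-Real.sqrt (2*((k:ℝ)+1)) * (-1:ℝ)^k * Real.exp (x^2/2) * gaussD k x) * h1
      + ((-1:ℝ)^k * Real.exp (x^2/2) * gaussD k x * herC (k+1)) * hm

/-- Lowering ladder relation. -/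
private lemma hasDerivAt_hermiteFn' (k : ℕ) (x : ℝ) :
    HasDerivAt (hermiteFn k)
      (Real.sqrt (2*(k:ℝ)) * hermiteFn (k-1) x - x * hermiteFn k x) x := by
  cases k with
  | zero =>
    have h := hasDerivAt_hermiteFn 0 x
    have hrec := hermiteFn_rec 0 x
    simp only [Nat.cast_zero, mul_zero, Real.sqrt_zero, zero_mul, sub_zero, zero_add,
      mul_one, Nat.zero_sub] at h hrec ⊢
    convert h using 1
    linarith
  | succ k =>
    have h := hasDerivAt_hermiteFn (k+1) x
    have hrec := hermiteFn_rec (k+1) x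
    simp only [Nat.add_sub_cancel] at *
    convert h using 1
    push_cast at hrec ⊢
    linarith

/-- Christoffel–Darboux (confluent form). -/
private lemma pGUE_eq (n : ℕ) (x : ℝ) :
    pGUE n x = n*(hermiteFn (n-1) x^2 + hermiteFn n x^2)
      - Real.sqrt (2*(n:ℝ))*x*hermiteFn (n-1) x*hermiteFn n x := by
  induction n with
  | zero => simp [pGUE]
  | succ n ih =>
    rw [pGUE, Finset.sum_range_succ, ← pGUE, ih]
    simp only [Nat.add_sub_cancel]
    have e := hermiteFn_rec n x
    have s1 : Real.sqrt (2*((n:ℝ)+1)) * Real.sqrt (2*((n:ℝ)+1)) = 2*((n:ℝ)+1) :=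
      Real.mul_self_sqrt (by positivity)
    have s2 : Real.sqrt (2*(n:ℝ)) * Real.sqrt (2*(n:ℝ)) = 2*(n:ℝ) :=
      Real.mul_self_sqrt (by positivity)
    push_cast
    linear_combination (-(Real.sqrt (2*((n:ℝ)+1))/2) * hermiteFn (n+1) x
        + (Real.sqrt (2*(n:ℝ))/2) * hermiteFn (n-1) x) * e
      + (hermiteFn (n+1) x^2/2) * s1 - (hermiteFn (n-1) x^2/2) * s2

private lemma hasDerivAt_pGUE (n : ℕ) (x : ℝ) :
    HasDerivAt (pGUE n)
      (-(Real.sqrt (2*(n:ℝ)) * hermiteFn (n-1) x * hermiteFn n x)) x := by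
  have key : ∀ k, HasDerivAt (fun y => hermiteFn k y ^ 2)
      (Real.sqrt (2*(k:ℝ)) * hermiteFn (k-1) x * hermiteFn k x
        - Real.sqrt (2*((k:ℝ)+1)) * hermiteFn k x * hermiteFn (k+1) x) x := by
    intro k
    have h := (hasDerivAt_hermiteFn k x).fun_pow 2
    refine h.congr_deriv (Eq.symm ?_)
    have hrec := hermiteFn_rec k x
    linear_combination (hermiteFn k x) * hrec
  have hsum : HasDerivAt (fun y => ∑ k ∈ Finset.range n, hermiteFn k y ^ 2)
      (∑ k ∈ Finset.range n, (Real.sqrt (2*(k:ℝ)) * hermiteFn (k-1) x * hermiteFn k x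
        - Real.sqrt (2*((k:ℝ)+1)) * hermiteFn k x * hermiteFn (k+1) x)) x :=
    HasDerivAt.fun_sum (fun k _ => key k)
  have hval : (∑ k ∈ Finset.range n,
      (Real.sqrt (2*(k:ℝ)) * hermiteFn (k-1) x * hermiteFn k x
        - Real.sqrt (2*((k:ℝ)+1)) * hermiteFn k x * hermiteFn (k+1) x))
      = -(Real.sqrt (2*(n:ℝ)) * hermiteFn (n-1) x * hermiteFn n x) := by
    set b : ℕ → ℝ := fun k => Real.sqrt (2*(k:ℝ)) * hermiteFn (k-1) x * hermiteFn k x with hb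
    have h1 : ∀ k ∈ Finset.range n,
        (Real.sqrt (2*(k:ℝ)) * hermiteFn (k-1) x * hermiteFn k x
          - Real.sqrt (2*((k:ℝ)+1)) * hermiteFn k x * hermiteFn (k+1) x)
        = b k - b (k+1) := by
      intro k _
      simp only [hb, Nat.add_sub_cancel]
      push_cast
      ring
    rw [Finset.sum_congr rfl h1, Finset.sum_range_sub' b n]
    simp [hb]
  rw [← hval]
  exact hsum

/-- `gaussD` is a polynomial times the Gaussian. -/
private lemma gaussD_poly (k : ℕ) :
    ∃ p : Polynomial ℝ, ∀ x, gaussD k x = p.eval x * Real.exp (-x^2) := by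
  induction k with
  | zero => exact ⟨1, fun x => by simp [gaussD]⟩
  | succ k ih =>
    obtain ⟨p, hp⟩ := ih
    refine ⟨p.derivative - Polynomial.X * 2 * p, fun x => ?_⟩
    have hg : gaussD k = fun x => p.eval x * Real.exp (-x^2) := funext hp
    have hd : HasDerivAt (fun x : ℝ => p.eval x * Real.exp (-x^2))
        (p.derivative.eval x * Real.exp (-x^2) + p.eval x * (Real.exp (-x^2) * (-(2*x)))) x := by
      have := (p.hasDerivAt x).fun_mul ((hasDerivAt_pow 2 x).fun_neg).exp
      refine this.congr_deriv (Eq.symm ?_)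
      ring
    rw [show gaussD (k+1) = deriv (gaussD k) from iteratedDeriv_succ, hg, hd.deriv]
    simp only [Polynomial.eval_sub, Polynomial.eval_mul, Polynomial.eval_X,
      Polynomial.eval_ofNat]
    ring

private lemma hermiteFn_integrable (k : ℕ) : Integrable (hermiteFn k) := by
  obtain ⟨p, hp⟩ := gaussD_poly k
  have hfun : hermiteFn k = fun x => (herC k * (-1)^k) * (p.eval x * Real.exp (-x^2/2)) := by
    funext x
    rw [hermiteFn_eq, hp]
    have h : Real.exp (x^2/2) * Real.exp (-x^2) = Real.exp (-x^2/2) := by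
      rw [← Real.exp_add]; ring_nf
    linear_combination (herC k * (-1:ℝ)^k * p.eval x) * h
  rw [hfun]
  apply Integrable.const_mul
  have heq : (fun x : ℝ => p.eval x * Real.exp (-x^2/2))
      = fun x : ℝ => ∑ i ∈ Finset.range (p.natDegree+1),
          p.coeff i * (x^i * Real.exp (-(1/2 : ℝ)*x^2)) := by
    funext x
    rw [Polynomial.eval_eq_sum_range, Finset.sum_mul]
    apply Finset.sum_congr rfl
    intro i _
    rw [show -(x^2)/2 = -(1/2 : ℝ)*x^2 by ring]
    ring
  rw [heq]
  apply integrable_finset_sum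
  intro i _
  apply Integrable.const_mul
  have := integrable_rpow_mul_exp_neg_mul_sq (b := (1/2 : ℝ)) (by norm_num)
    (s := (i : ℝ)) (lt_of_lt_of_le (by norm_num) (Nat.cast_nonneg i))
  simpa [Real.rpow_natCast] using this

private lemma hermiteFn_continuous (k : ℕ) : Continuous (hermiteFn k) :=
  continuous_iff_continuousAt.mpr fun x => (hasDerivAt_hermiteFn k x).continuousAt

/-- The signed integral as an `Iic` integral. -/
private lemma sign_integral (ψ : ℝ → ℝ) (hψ : Integrable ψ) (x : ℝ) :
    (1/2 : ℝ) * (∫ t, Real.sign (x - t) * ψ t)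
      = (∫ t in Set.Iic x, ψ t) - (1/2 : ℝ) * ∫ t, ψ t := by
  have hx : ∀ᵐ (t : ℝ), t ≠ x := by
    refine ae_iff.mpr ?_
    have : {t : ℝ | ¬ t ≠ x} = {x} := by ext t; simp
    rw [this]
    exact measure_singleton x
  have hae : (fun t => Real.sign (x - t) * ψ t)
      =ᵐ[volume] fun t => Set.indicator (Set.Iic x) ψ t - Set.indicator (Set.Ioi x) ψ t := by
    filter_upwards [hx] with t ht
    rcases lt_trichotomy t x with h | h | h
    · rw [Real.sign_of_pos (by linarith : (0:ℝ) < x - t)]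
      rw [Set.indicator_of_mem (Set.mem_Iic.mpr h.le), Set.indicator_of_notMem (by
        simp [Set.mem_Ioi]; linarith)]
      ring
    · exact absurd h ht
    · rw [Real.sign_of_neg (by linarith : x - t < 0)]
      rw [Set.indicator_of_notMem (by simp [Set.mem_Iic]; linarith),
        Set.indicator_of_mem (Set.mem_Ioi.mpr h)]
      ring
  have h1 : (∫ t, Real.sign (x - t) * ψ t)
      = (∫ t in Set.Iic x, ψ t) - ∫ t in Set.Ioi x, ψ t := by
    rw [integral_congr_ae hae,
      integral_sub (hψ.indicator measurableSet_Iic) (hψ.indicator measurableSet_Ioi),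
      integral_indicator measurableSet_Iic, integral_indicator measurableSet_Ioi]
  have h2 : (∫ t in Set.Iic x, ψ t) + ∫ t in Set.Ioi x, ψ t = ∫ t, ψ t := by
    have := integral_add_compl (measurableSet_Iic (a := x)) hψ
    rwa [Set.compl_Iic] at this
  rw [h1]
  linarith

private lemma hasDerivAt_Iic_integral (ψ : ℝ → ℝ) (hψ : Integrable ψ)
    (hc : Continuous ψ) (x : ℝ) :
    HasDerivAt (fun y => ∫ t in Set.Iic y, ψ t) (ψ x) x := by
  have hfun : (fun y => ∫ t in Set.Iic y, ψ t)
      = fun y => (∫ t in (0:ℝ)..y, ψ t) + ∫ t in Set.Iic (0:ℝ), ψ t := by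
    funext y
    rw [← intervalIntegral.integral_Iic_sub_Iic hψ.integrableOn hψ.integrableOn]
    ring
  rw [hfun]
  have h := intervalIntegral.integral_hasDerivAt_right
    (hψ.intervalIntegrable (a := 0) (b := x))
    (hc.stronglyMeasurableAtFilter volume (nhds x))
    hc.continuousAt
  exact h.add_const _

private lemma sqrt_half_eq (n : ℕ) : Real.sqrt ((n:ℝ)/2) = Real.sqrt (2*(n:ℝ))/2 := by
  rw [show (n:ℝ)/2 = (2*(n:ℝ))/4 by ring, Real.sqrt_div (by positivity),
    show (4:ℝ) = 2^2 by norm_num, Real.sqrt_sq (by norm_num)]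

private lemma hasDerivAt_of_eq {f : ℝ → ℝ} {v w x : ℝ} (h : HasDerivAt f v x)
    (hvw : v = w) : HasDerivAt f w x := hvw ▸ h

private theorem key_ode (N s a : ℝ) (f g Jf : ℝ → ℝ) (hs : s * s = 2 * N)
    (hf : ∀ y, HasDerivAt f (y * f y - s * g y) y)
    (hg : ∀ y, HasDerivAt g (s * f y - y * g y) y)
    (hJ : ∀ y, HasDerivAt Jf (g y) y)
    (F : ℝ → ℝ)
    (hF : F = fun y => (1 * N) * ((g y)^2) + (1 * a) * (f y) + ((1/2) * s) * (f y * (Jf y)) + (-1 * s) * (f y * (g y * (y))) + (1 * N) * ((f y)^2))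
    (x : ℝ) :
    2 * iteratedDeriv 3 F x + 2 * (2 * N - 1 - x ^ 2) * deriv F x - 4 * x * F x =
      -3 * (-(s * f x * g x)) - 6 * x * (N * (f x ^ 2 + g x ^ 2) - s * x * f x * g x) := by
  subst hF
  have hd1 : ∀ y, HasDerivAt (fun y => (1 * N) * ((g y)^2) + (1 * a) * (f y) + ((1/2) * s) * (f y * (Jf y)) + (-1 * s) * (f y * (g y * (y))) + (1 * N) * ((f y)^2)) ((-1 * s * a) * (g y) + ((-1/2) * s^2) * (g y * (Jf y)) + (-2 * N) * ((g y)^2 * (y)) + (1 * s^2) * ((g y)^2 * (y)) + (1 * a) * (f y * (y)) + ((1/2) * s) * (f y * (Jf y * (y))) + ((-1/2) * s) * (f y * (g y)) + (2 * N) * ((f y)^2 * (y)) + (-1 * s^2) * ((f y)^2 * (y))) y := by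
    intro y
    exact hasDerivAt_of_eq (((((((hg y).fun_pow 2).const_mul (1 * N)).add ((hf y).const_mul (1 * a))).add (((hf y).fun_mul (hJ y)).const_mul ((1/2) * s))).add (((hf y).fun_mul ((hg y).fun_mul (hasDerivAt_id y))).const_mul (-1 * s))).add (((hf y).fun_pow 2).const_mul (1 * N))) (by simp only [id_eq]; ring)
  have hd2 : ∀ y, HasDerivAt (fun y => (-1 * s * a) * (g y) + ((-1/2) * s^2) * (g y * (Jf y)) + (-2 * N) * ((g y)^2 * (y)) + (1 * s^2) * ((g y)^2 * (y)) + (1 * a) * (f y * (y)) + ((1/2) * s) * (f y * (Jf y * (y))) + ((-1/2) * s) * (f y * (g y)) + (2 * N) * ((f y)^2 * (y)) + (-1 * s^2) * ((f y)^2 * (y))) ((-2 * N) * ((g y)^2) + (1 * s^2) * ((g y)^2) + (4 * N) * ((g y)^2 * (y^2)) + (-2 * s^2) * ((g y)^2 * (y^2)) + (1 * a) * (f y) + (-1 * s^2 * a) * (f y) + (1 * a) * (f y * (y^2)) + ((1/2) * s) * (f y * (Jf y)) + ((-1/2) * s^3) * (f y * (Jf y)) + ((1/2) * s) * (f y * (Jf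 y * (y^2))) + ((1/2) * s) * (f y * (g y * (y))) + (-8 * s * N) * (f y * (g y * (y))) + (4 * s^3) * (f y * (g y * (y))) + (2 * N) * ((f y)^2) + ((-3/2) * s^2) * ((f y)^2) + (4 * N) * ((f y)^2 * (y^2)) + (-2 * s^2) * ((f y)^2 * (y^2))) y := by
    intro y
    exact hasDerivAt_of_eq ((((((((((hg y).const_mul (-1 * s * a)).add (((hg y).fun_mul (hJ y)).const_mul ((-1/2) * s^2))).add ((((hg y).fun_pow 2).fun_mul (hasDerivAt_id y)).const_mul (-2 * N))).add ((((hg y).fun_pow 2).fun_mul (hasDerivAt_id y)).const_mul (1 * s^2))).add (((hf y).fun_mul (hasDerivAt_id y)).const_mul (1 * a))).add (((hf y).fun_mul ((hJ y).fun_mul (hasDerivAt_id y))).const_mul ((1/2) * s))).add (((hf y).fun_mul (hg y)).const_mul ((-1/2) * s))).add ((((hf y).fun_pow 2).fun_mul (hasDerivAt_id y)).const_mul (2 * N))).add ((((hf y).fun_pow 2).fun_mul (hasDerivAt_id y)).const_mul (-1 * s^2))) (by simp only [id_eq]; ring)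
  have hd3 : ∀ y, HasDerivAt (fun y => (-2 * N) * ((g y)^2) + (1 * s^2) * ((g y)^2) + (4 * N) * ((g y)^2 * (y^2)) + (-2 * s^2) * ((g y)^2 * (y^2)) + (1 * a) * (f y) + (-1 * s^2 * a) * (f y) + (1 * a) * (f y * (y^2)) + ((1/2) * s) * (f y * (Jf y)) + ((-1/2) * s^3) * (f y * (Jf y)) + ((1/2) * s) * (f y * (Jf y * (y^2))) + ((1/2) * s) * (f y * (g y * (y))) + (-8 * s * N) * (f y * (g y * (y))) + (4 * s^3) * (f y * (g y * (y))) + (2 * N) * ((f y)^2) + ((-3/2) * s^2) * ((f y)^2) + (4 * N) * ((f y)^2 * (y^2)) + (-2 * s^2) * ((f y)^2 * (y^2))) ((-1 * s * a) * (g y) + (1 * s^3 * a) * (g y) + (-1 * s * a) * (g y * (y^2)) + ((-1/2) * s^2) * (g y * (Jf y)) + ((1/2) * s^4) * (g y * (Jf y)) + ((-1/2) * s^2) * (g y * (Jf y * (y^2))) + (12 * N) * ((g y)^2 * (y)) + ((-13/2) * s^2) * ((g y)^2 * (y)) + (8 * s^2 * N) * ((g y)^2 * (y)) + (-4 * s^4)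 * ((g y)^2 * (y)) + (-8 * N) * ((g y)^2 * (y^3)) + (4 * s^2) * ((g y)^2 * (y^3)) + (3 * a) * (f y * (y)) + (-1 * s^2 * a) * (f y * (y)) + (1 * a) * (f y * (y^3)) + ((3/2) * s) * (f y * (Jf y * (y))) + ((-1/2) * s^3) * (f y * (Jf y * (y))) + ((1/2) * s) * (f y * (Jf y * (y^3))) + (1 * s) * (f y * (g y)) + (-16 * s * N) * (f y * (g y)) + ((17/2) * s^3) * (f y * (g y)) + ((1/2) * s) * (f y * (g y * (y^2))) + (12 * N) * ((f y)^2 * (y)) + ((-13/2) * s^2) * ((f y)^2 * (y)) + (-8 * s^2 * N) * ((f y)^2 * (y)) + (4 * s^4) * ((f y)^2 * (y)) + (8 * N) * ((f y)^2 * (y^3)) + (-4 * s^2) * ((f y)^2 * (y^3))) y := by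
    intro y
    exact hasDerivAt_of_eq (((((((((((((((((((hg y).fun_pow 2).const_mul (-2 * N)).add (((hg y).fun_pow 2).const_mul (1 * s^2))).add ((((hg y).fun_pow 2).fun_mul (hasDerivAt_pow 2 y)).const_mul (4 * N))).add ((((hg y).fun_pow 2).fun_mul (hasDerivAt_pow 2 y)).const_mul (-2 * s^2))).add ((hf y).const_mul (1 * a))).add ((hf y).const_mul (-1 * s^2 * a))).add (((hf y).fun_mul (hasDerivAt_pow 2 y)).const_mul (1 * a))).add (((hf y).fun_mul (hJ y)).const_mul ((1/2) * s))).add (((hf y).fun_mul (hJ y)).const_mul ((-1/2) * s^3))).add (((hf y).fun_mul ((hJ y).fun_mul (hasDerivAt_pow 2 y))).const_mul ((1/2) * s))).add (((hf y).fun_mul ((hg y).fun_mul (hasDerivAt_id y))).const_mul ((1/2) * s))).add (((hf y).fun_mul ((hg y).fun_mul (hasDerivAt_id y))).const_mul (-8 * s * N))).add (((hf y).fun_mul ((hg y).fun_mul (hasDerivAt_id y))).const_mul (4 * s^3))).add (((hf y).fun_pow 2).const_mul (2 * N))).add (((hf y).fun_pow 2).const_mul ((-3/2) * s^2))).add ((((hf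 y).fun_pow 2).fun_mul (hasDerivAt_pow 2 y)).const_mul (4 * N))).add ((((hf y).fun_pow 2).fun_mul (hasDerivAt_pow 2 y)).const_mul (-2 * s^2))) (by simp only [id_eq]; ring)
  have e1 : deriv (fun y => (1 * N) * ((g y)^2) + (1 * a) * (f y) + ((1/2) * s) * (f y * (Jf y)) + (-1 * s) * (f y * (g y * (y))) + (1 * N) * ((f y)^2)) = fun y => (-1 * s * a) * (g y) + ((-1/2) * s^2) * (g y * (Jf y)) + (-2 * N) * ((g y)^2 * (y)) + (1 * s^2) * ((g y)^2 * (y)) + (1 * a) * (f y * (y)) + ((1/2) * s) * (f y * (Jf y * (y))) + ((-1/2) * s) * (f y * (g y)) + (2 * N) * ((f y)^2 * (y)) + (-1 * s^2) * ((f y)^2 * (y)) := funext fun y => (hd1 y).deriv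
  have e2 : deriv (fun y => (-1 * s * a) * (g y) + ((-1/2) * s^2) * (g y * (Jf y)) + (-2 * N) * ((g y)^2 * (y)) + (1 * s^2) * ((g y)^2 * (y)) + (1 * a) * (f y * (y)) + ((1/2) * s) * (f y * (Jf y * (y))) + ((-1/2) * s) * (f y * (g y)) + (2 * N) * ((f y)^2 * (y)) + (-1 * s^2) * ((f y)^2 * (y))) = fun y => (-2 * N) * ((g y)^2) + (1 * s^2) * ((g y)^2) + (4 * N) * ((g y)^2 * (y^2)) + (-2 * s^2) * ((g y)^2 * (y^2)) + (1 * a) * (f y) + (-1 * s^2 * a) * (f y) + (1 * a) * (f y * (y^2)) + ((1/2) * s) * (f y * (Jf y)) + ((-1/2) * s^3) * (f y * (Jf y)) + ((1/2) * s) * (f y * (Jf y * (y^2))) + ((1/2) * s) * (f y * (g y * (y))) + (-8 * s * N) * (f y * (g y * (y))) + (4 * s^3) * (f y * (g y * (y))) + (2 * N) * ((f y)^2) + ((-3/2) * s^2) * ((f y)^2) + (4 * N) * ((f y)^2 * (y^2)) + (-2 * s^2) * ((f y)^2 * (y^2)) := funext fun y => (hd2 y).deriv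
  have e3 : deriv (fun y => (-2 * N) * ((g y)^2) + (1 * s^2) * ((g y)^2) + (4 * N) * ((g y)^2 * (y^2)) + (-2 * s^2) * ((g y)^2 * (y^2)) + (1 * a) * (f y) + (-1 * s^2 * a) * (f y) + (1 * a) * (f y * (y^2)) + ((1/2) * s) * (f y * (Jf y)) + ((-1/2) * s^3) * (f y * (Jf y)) + ((1/2) * s) * (f y * (Jf y * (y^2))) + ((1/2) * s) * (f y * (g y * (y))) + (-8 * s * N) * (f y * (g y * (y))) + (4 * s^3) * (f y * (g y * (y))) + (2 * N) * ((f y)^2) + ((-3/2) * s^2) * ((f y)^2) + (4 * N) * ((f y)^2 * (y^2)) + (-2 * s^2) * ((f y)^2 * (y^2))) = fun y => (-1 * s * a) * (g y) + (1 * s^3 * a) * (g y) + (-1 * s * a) * (g y * (y^2)) + ((-1/2) * s^2) * (g y * (Jf y)) + ((1/2) * s^4) * (g y * (Jf y)) + ((-1/2) * s^2) * (g y * (Jf y * (y^2))) + (12 * N) * ((g y)^2 * (y)) + ((-13/2) * s^2) * ((g y)^2 * (y)) + (8 * s^2 * N) * ((g y)^2 * (y)) + (-4 * s^4) * ((g y)^2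 * (y)) + (-8 * N) * ((g y)^2 * (y^3)) + (4 * s^2) * ((g y)^2 * (y^3)) + (3 * a) * (f y * (y)) + (-1 * s^2 * a) * (f y * (y)) + (1 * a) * (f y * (y^3)) + ((3/2) * s) * (f y * (Jf y * (y))) + ((-1/2) * s^3) * (f y * (Jf y * (y))) + ((1/2) * s) * (f y * (Jf y * (y^3))) + (1 * s) * (f y * (g y)) + (-16 * s * N) * (f y * (g y)) + ((17/2) * s^3) * (f y * (g y)) + ((1/2) * s) * (f y * (g y * (y^2))) + (12 * N) * ((f y)^2 * (y)) + ((-13/2) * s^2) * ((f y)^2 * (y)) + (-8 * s^2 * N) * ((f y)^2 * (y)) + (4 * s^4) * ((f y)^2 * (y)) + (8 * N) * ((f y)^2 * (y^3)) + (-4 * s^2) * ((f y)^2 * (y^3)) := funext fun y => (hd3 y).deriv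
  have e4 : iteratedDeriv 3 (fun y => (1 * N) * ((g y)^2) + (1 * a) * (f y) + ((1/2) * s) * (f y * (Jf y)) + (-1 * s) * (f y * (g y * (y))) + (1 * N) * ((f y)^2)) = fun y => (-1 * s * a) * (g y) + (1 * s^3 * a) * (g y) + (-1 * s * a) * (g y * (y^2)) + ((-1/2) * s^2) * (g y * (Jf y)) + ((1/2) * s^4) * (g y * (Jf y)) + ((-1/2) * s^2) * (g y * (Jf y * (y^2))) + (12 * N) * ((g y)^2 * (y)) + ((-13/2) * s^2) * ((g y)^2 * (y)) + (8 * s^2 * N) * ((g y)^2 * (y)) + (-4 * s^4) * ((g y)^2 * (y)) + (-8 * N) * ((g y)^2 * (y^3)) + (4 * s^2) * ((g y)^2 * (y^3)) + (3 * a) * (f y * (y)) + (-1 * s^2 * a) * (f y * (y)) + (1 * a) * (f y * (y^3)) + ((3/2) * s) * (f y * (Jf y * (y))) + ((-1/2) * s^3) * (f y * (Jf y * (y))) + ((1/2) * s) * (f y * (Jf y * (y^3))) + (1 * s) * (f y * (g y)) + (-16 * s * N) * (f y * (g y)) + ((17/2) * s^3) * (f y * (g y)) + ((1/2) * s) * (f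 y * (g y * (y^2))) + (12 * N) * ((f y)^2 * (y)) + ((-13/2) * s^2) * ((f y)^2 * (y)) + (-8 * s^2 * N) * ((f y)^2 * (y)) + (4 * s^4) * ((f y)^2 * (y)) + (8 * N) * ((f y)^2 * (y^3)) + (-4 * s^2) * ((f y)^2 * (y^3)) := by
    have h1 : iteratedDeriv 3 (fun y => (1 * N) * ((g y)^2) + (1 * a) * (f y) + ((1/2) * s) * (f y * (Jf y)) + (-1 * s) * (f y * (g y * (y))) + (1 * N) * ((f y)^2)) = deriv (iteratedDeriv 2 (fun y => (1 * N) * ((g y)^2) + (1 * a) * (f y) + ((1/2) * s) * (f y * (Jf y)) + (-1 * s) * (f y * (g y * (y))) + (1 * N) * ((f y)^2))) :=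
      iteratedDeriv_succ
    have h2 : iteratedDeriv 2 (fun y => (1 * N) * ((g y)^2) + (1 * a) * (f y) + ((1/2) * s) * (f y * (Jf y)) + (-1 * s) * (f y * (g y * (y))) + (1 * N) * ((f y)^2)) = deriv (iteratedDeriv 1 (fun y => (1 * N) * ((g y)^2) + (1 * a) * (f y) + ((1/2) * s) * (f y * (Jf y)) + (-1 * s) * (f y * (g y * (y))) + (1 * N) * ((f y)^2))) :=
      iteratedDeriv_succ
    have h3 : iteratedDeriv 1 (fun y => (1 * N) * ((g y)^2) + (1 * a) * (f y) + ((1/2) * s) * (f y * (Jf y)) + (-1 * s) * (f y * (g y * (y))) + (1 * N) * ((f y)^2)) = deriv (fun y => (1 * N) * ((g y)^2) + (1 * a) * (f y) + ((1/2) * s) * (f y * (Jf y)) + (-1 * s) * (f y * (g y * (y))) + (1 * N) * ((f y)^2)) := iteratedDeriv_one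
    rw [h1, h2, h3, e1, e2, e3]
  rw [e4, e1]
  beta_reduce
  linear_combination (2*(g x)*s*a + 1*(g x)*(Jf x)*s^2 + -15*(g x)^2*x + 4*(g x)^2*x*N + -8*(g x)^2*x*s^2 + 6*(g x)^2*x^3 + -2*(f x)*x*a + -1*(f x)*(Jf x)*x*s + 17*(f x)*(g x)*s + -11*(f x)^2*x + -4*(f x)^2*x*N + 8*(f x)^2*x*s^2 + -6*(f x)^2*x^3) * hs

theorem goe_density_ode (n : ℕ) (hn : 1 ≤ n) (po : ℝ → ℝ)
    (hpo : po = fun y => pGUE n y + tauFn n y + (if Odd n then alphaFn n y else 0)) (x : ℝ) :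
    2 * iteratedDeriv 3 po x + 2*(2*n - 1 - x^2) * deriv po x - 4*x * po x =
      -3 * deriv (pGUE n) x - 6*x * pGUE n x := by
  obtain ⟨m, rfl⟩ : ∃ m, n = m + 1 := ⟨n - 1, (Nat.succ_pred_eq_of_pos hn).symm⟩
  subst hpo
  set f : ℝ → ℝ := hermiteFn m with hf_def
  set g : ℝ → ℝ := hermiteFn (m+1) with hg_def
  set N : ℝ := (m:ℝ) + 1 with hN_def
  set s : ℝ := Real.sqrt (2*N) with hs_def
  set a : ℝ := if Odd (m+1) then (∫ t : ℝ, hermiteFn m t)⁻¹ else 0 with ha_def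
  set Jf : ℝ → ℝ := fun y => (∫ t in Set.Iic y, g t) - (1/2 : ℝ) * ∫ t : ℝ, g t with hJ_def
  have hs : s * s = 2 * N := Real.mul_self_sqrt (by positivity)
  have hf : ∀ y, HasDerivAt f (y * f y - s * g y) y := by
    intro y
    have := hasDerivAt_hermiteFn m y
    exact this
  have hg : ∀ y, HasDerivAt g (s * f y - y * g y) y := by
    intro y
    have h := hasDerivAt_hermiteFn' (m+1) y
    simp only [Nat.add_sub_cancel] at h
    have hcast : Real.sqrt (2*((m+1 : ℕ):ℝ)) = s := by push_cast [hs_def, hN_def]; ring_nf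
    rw [hcast] at h
    exact h
  have hJ : ∀ y, HasDerivAt Jf (g y) y := by
    intro y
    exact (hasDerivAt_Iic_integral g (hermiteFn_integrable (m+1))
      (hermiteFn_continuous (m+1)) y).sub_const _
  have hpg : ∀ y, pGUE (m+1) y = N * (f y ^ 2 + g y ^ 2) - s * y * f y * g y := by
    intro y
    have := pGUE_eq (m+1) y
    simp only [Nat.add_sub_cancel] at this
    rw [this]
    have hcast : Real.sqrt (2*((m+1 : ℕ):ℝ)) = s := by push_cast [hs_def, hN_def]; ring_nf
    rw [hcast]
    push_cast [hN_def]
    ring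
  have htau : ∀ y, tauFn (m+1) y = (1 * N) * ((g y)^2) + (1 * a) * (f y)
      + ((1/2) * s) * (f y * (Jf y)) + (-1 * s) * (f y * (g y * (y))) + (1 * N) * ((f y)^2)
      - (pGUE (m+1) y + (if Odd (m+1) then alphaFn (m+1) y else 0)) := by
    intro y
    have h1 : tauFn (m+1) y = (s/2) * (f y * Jf y) := by
      rw [tauFn]
      simp only [Nat.add_sub_cancel]
      rw [sign_integral (hermiteFn (m+1)) (hermiteFn_integrable (m+1)) y]
      have hcast : Real.sqrt (((m+1 : ℕ):ℝ)/2) = s/2 := by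
        rw [sqrt_half_eq (m+1)]
        push_cast [hs_def, hN_def]
        ring_nf
      rw [hcast]
      simp only [hJ_def, hf_def, hg_def]
      ring
    have h2 : (if Odd (m+1) then alphaFn (m+1) y else 0) = a * f y := by
      rw [ha_def]
      split_ifs with h
      · rw [alphaFn]
        simp only [Nat.add_sub_cancel, hf_def]
        rw [div_eq_inv_mul]
      · rw [zero_mul]
    rw [h1, h2, hpg y]
    ring
  have hFfun : (fun y => pGUE (m+1) y + tauFn (m+1) y + (if Odd (m+1) then alphaFn (m+1) y else 0))
      = fun y => (1 * N) * ((g y)^2) + (1 * a) * (f y) + ((1/2) * s) * (f y * (Jf y))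
        + (-1 * s) * (f y * (g y * (y))) + (1 * N) * ((f y)^2) := by
    funext y
    rw [htau y]
    ring
  have hkey := key_ode N s a f g Jf hs hf hg hJ _ hFfun x
  have hcast : Real.sqrt (2*((m+1 : ℕ):ℝ)) = s := by push_cast [hs_def, hN_def]; ring_nf
  have hc2 : ((m+1 : ℕ) : ℝ) = N := by rw [hN_def]; push_cast; ring
  rw [hc2]
  beta_reduce
  rw [hkey, (hasDerivAt_pGUE (m+1) x).deriv, hpg x]
  simp only [Nat.add_sub_cancel, ← hf_def, ← hg_def, hcast]
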